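/- Let ξ, X ∈ ℤ³ be primitive vectors (each has the gcd of its three coordinates equal to 1) with ξ·X = 0. Then there exists an integer 3×3 matrix g with det g = 1 such that the first row of g equals ξ and g·X = (0, 0, 1)ᵀ. -/

import Mathlib

/-- A primitive vector in ℤ³ can be mapped to (0,0,1) by an SL(3,ℤ) matrix. -/
lemma aux_reduce (X : Fin 3 → ℤ)
    (hX : Int.gcd (Int.gcd (X 0) (X 1)) (X 2) = 1) :
    ∃ B : Matrix (Fin 3) (Fin 3) ℤ, B.det = 1 ∧ B.mulVec X = ![0, 0, 1] := by
  set x := X 0 with hx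
  set y := X 1 with hy
  set z := X 2 with hz
  by_cases h0 : Int.gcd x y = 0
  · -- x = y = 0, z = ±1
    have hx0 : x = 0 := (Int.gcd_eq_zero_iff.mp h0).1
    have hy0 : y = 0 := (Int.gcd_eq_zero_iff.mp h0).2
    rw [h0] at hX
    have hz2 : z * z = 1 := by
      have : z.natAbs = 1 := by simpa [Int.gcd] using hX
      rcases Int.natAbs_eq_iff.mp this with h | h <;> simp [h]
    refine ⟨![![1, 0, 0], ![0, z, 0], ![0, 0, z]], ?_, ?_⟩
    · erw [Matrix.det_fin_three]; simp; linarith [hz2]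
    · funext i
      fin_cases i <;>
        simp [Matrix.mulVec, dotProduct, Fin.sum_univ_three, ← hx, ← hy, ← hz,
          hx0, hy0, hz2]
  · set d : ℤ := (Int.gcd x y : ℤ) with hd
    have hdne : d ≠ 0 := Int.natCast_ne_zero.mpr h0
    set p := Int.gcdA x y with hp
    set q := Int.gcdB x y with hq
    have hpq : x * p + y * q = d := (Int.gcd_eq_gcd_ab x y).symm
    obtain ⟨a, ha⟩ : d ∣ x := Int.gcd_dvd_left x y
    obtain ⟨b, hb⟩ : d ∣ y := Int.gcd_dvd_right x y
    have hab : a * p + b * q = 1 := by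
      apply mul_left_cancel₀ hdne
      linear_combination hpq - p * ha - q * hb
    set r := Int.gcdA d z with hr
    set s := Int.gcdB d z with hs
    have hrs : d * r + z * s = 1 := by
      have h := Int.gcd_eq_gcd_ab d z
      rw [hX] at h
      exact_mod_cast h.symm
    refine ⟨![![z * p, z * q, -d], ![-b, a, 0], ![r * p, r * q, s]], ?_, ?_⟩
    · erw [Matrix.det_fin_three]
      simp only [Matrix.cons_val', Matrix.cons_val_zero, Matrix.cons_val_one,
        Matrix.head_cons, Matrix.head_fin_const, Matrix.cons_val_fin_one, Matrix.empty_val',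
        Matrix.cons_val_two, Matrix.tail_cons]
      linear_combination (z * s + d * r) * hab + hrs
    · funext i
      fin_cases i <;>
        simp [Matrix.mulVec, dotProduct, Fin.sum_univ_three, ← hx, ← hy, ← hz]
      · linear_combination z * hpq
      · linear_combination (-b) * ha + a * hb
      · linear_combination r * hpq + hrs

theorem stmt_5 (ξ X : Fin 3 → ℤ)
    (hξ : Int.gcd (Int.gcd (ξ 0) (ξ 1)) (ξ 2) = 1)
    (hX : Int.gcd (Int.gcd (X 0) (X 1)) (X 2) = 1)
    (horth : ξ 0 * X 0 + ξ 1 * X 1 + ξ 2 * X 2 = 0) :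
    ∃ g : Matrix (Fin 3) (Fin 3) ℤ, g.det = 1 ∧ (∀ j, g 0 j = ξ j) ∧
      g.mulVec X = ![0, 0, 1] := by
  obtain ⟨B, hBdet, hBX⟩ := aux_reduce X hX
  set η : Fin 3 → ℤ := Matrix.vecMul ξ B.adjugate with hη
  have hηB : Matrix.vecMul η B = ξ := by
    rw [hη, Matrix.vecMul_vecMul, Matrix.adjugate_mul, hBdet, one_smul,
      Matrix.vecMul_one]
  -- η 2 = 0 from orthogonality
  have hη2 : η 2 = 0 := by
    have h1 : dotProduct (Matrix.vecMul η B) X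
        = dotProduct η (B.mulVec X) :=
      (Matrix.dotProduct_mulVec η B X).symm
    rw [hηB, hBX] at h1
    have h2 : dotProduct ξ X = 0 := by
      simpa [dotProduct, Fin.sum_univ_three] using horth
    have h3 : dotProduct η (![0, 0, 1] : Fin 3 → ℤ) = η 2 := by
      simp [dotProduct, Fin.sum_univ_three]
    rw [h2, h3] at h1
    exact h1.symm
  -- gcd (η 0) (η 1) = 1
  have hηgcd : Int.gcd (η 0) (η 1) = 1 := by
    have hdvd : ∀ j, (↑(Int.gcd (η 0) (η 1)) : ℤ) ∣ ξ j := by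
      intro j
      rw [← hηB]
      have : Matrix.vecMul η B j = η 0 * B 0 j + η 1 * B 1 j + η 2 * B 2 j := by
        simp [Matrix.vecMul, dotProduct, Fin.sum_univ_three]
      rw [this, hη2, zero_mul, add_zero]
      exact dvd_add (Dvd.dvd.mul_right (Int.gcd_dvd_left _ _) _)
        (Dvd.dvd.mul_right (Int.gcd_dvd_right _ _) _)
    have h1 : (↑(Int.gcd (η 0) (η 1)) : ℤ) ∣ (↑(Int.gcd (Int.gcd (ξ 0) (ξ 1)) (ξ 2)) : ℤ) :=
      Int.dvd_coe_gcd (Int.dvd_coe_gcd (hdvd 0) (hdvd 1)) (hdvd 2)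
    rw [hξ] at h1
    exact Nat.dvd_one.mp (by exact_mod_cast h1)
  set p := Int.gcdA (η 0) (η 1) with hp
  set q := Int.gcdB (η 0) (η 1) with hq
  have hpq : η 0 * p + η 1 * q = 1 := by
    have h := Int.gcd_eq_gcd_ab (η 0) (η 1)
    rw [hηgcd] at h
    exact_mod_cast h.symm
  set C : Matrix (Fin 3) (Fin 3) ℤ := ![![η 0, η 1, 0], ![-q, p, 0], ![0, 0, 1]] with hC
  refine ⟨C * B, ?_, ?_, ?_⟩
  · rw [Matrix.det_mul, hBdet, mul_one, Matrix.det_fin_three]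
    simp [hC]
    linear_combination hpq
  · intro j
    have : (C * B) 0 j = η 0 * B 0 j + η 1 * B 1 j + η 2 * B 2 j := by
      rw [hη2]
      rw [Matrix.mul_apply, Fin.sum_univ_three]; simp [hC]
    rw [this, ← hηB]
    simp [Matrix.vecMul, dotProduct, Fin.sum_univ_three]
  · rw [← Matrix.mulVec_mulVec, hBX]
    funext i
    fin_cases i <;> simp [Matrix.mulVec, dotProduct, Fin.sum_univ_three, hC]
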